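/- Let K' be a symmetric convex body in an (n+1)-dimensional Euclidean space V', let p ∈ K' maximize Euclidean norm with s = ‖p‖, let V'' be the hyperplane orthogonal to p, and K'' = K' ∩ V''. Then ∫_{K'} ‖x‖₂^(n-1) dx ≥ Vol(K'')·sⁿ·2·(n-1)!·n!/(2n)!. -/

import Mathlib

open MeasureTheory intervalIntegral Pointwise

lemma beta_nat_integral (a b : ℕ) :
    ∫ x in (0:ℝ)..1, x ^ a * (1 - x) ^ b
      = (a.factorial * b.factorial : ℝ) / (a + b + 1).factorial := by
  induction b generalizing a with
  | zero =>
    simp only [pow_zero, mul_one, integral_pow, Nat.factorial_zero, Nat.cast_one,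
      one_pow, Nat.add_zero, Nat.factorial_succ, one_mul]
    rw [zero_pow (Nat.succ_ne_zero a)]
    have hfa : (a.factorial : ℝ) ≠ 0 := Nat.cast_ne_zero.mpr a.factorial_ne_zero
    push_cast
    field_simp
    norm_num
  | succ b ih =>
    have hu : ∀ x ∈ Set.uIcc (0:ℝ) 1, HasDerivAt (fun y : ℝ => y ^ (a+1) / (a+1)) (x ^ a) x := by
      intro x _
      have h := (hasDerivAt_pow (a+1) x).div_const ((a:ℝ)+1)
      have ha : ((a:ℝ)+1) ≠ 0 := by positivity
      refine h.congr_deriv ?_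
      push_cast
      field_simp
    have hv : ∀ x ∈ Set.uIcc (0:ℝ) 1, HasDerivAt (fun y : ℝ => (1 - y) ^ (b+1))
        (-(((b:ℝ)+1) * (1 - x) ^ b)) x := by
      intro x _
      have h := ((hasDerivAt_pow (b+1) (1 - x)).comp x ((hasDerivAt_id x).const_sub 1))
      refine h.congr_deriv ?_
      push_cast
      simp [hasDerivAt_id]
    have hparts := intervalIntegral.integral_mul_deriv_eq_deriv_mul hu hv
      ((continuous_pow a).intervalIntegrable 0 1)
      (((continuous_const.mul ((continuous_const.sub continuous_id).pow b)).neg).intervalIntegrable 0 1)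
    have hb : (∫ x in (0:ℝ)..1, x ^ (a+1) / ((a:ℝ)+1) * -(((b:ℝ)+1) * (1 - x) ^ b))
        = -(((b:ℝ)+1)/((a:ℝ)+1)) * ∫ x in (0:ℝ)..1, x ^ (a+1) * (1 - x) ^ b := by
      rw [← intervalIntegral.integral_const_mul]
      congr 1; ext x
      have ha : ((a:ℝ)+1) ≠ 0 := by positivity
      field_simp
    rw [hb] at hparts
    have hbd : (1:ℝ) ^ (a+1) / ((a:ℝ)+1) * (1 - 1) ^ (b+1)
        - (0:ℝ) ^ (a+1) / ((a:ℝ)+1) * (1 - 0) ^ (b+1) = 0 := by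
      norm_num
    rw [hbd] at hparts
    have key : ∫ x in (0:ℝ)..1, x ^ a * (1 - x) ^ (b+1)
        = ((b:ℝ)+1)/((a:ℝ)+1) * ∫ x in (0:ℝ)..1, x ^ (a+1) * (1 - x) ^ b := by
      linarith [hparts]
    rw [key, ih (a+1)]
    have h1 : ((a+1) + b + 1) = (a + (b+1) + 1) := by omega
    rw [h1, Nat.factorial_succ a, Nat.factorial_succ b]
    have ha : ((a:ℝ) + 1) ≠ 0 := by positivity
    have hfab : ((a + (b+1) + 1).factorial : ℝ) ≠ 0 := Nat.cast_ne_zero.mpr (Nat.factorial_ne_zero _)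
    push_cast
    field_simp

set_option maxHeartbeats 2000000 in
lemma oneD_integral (n : ℕ) (hn : 1 ≤ n) (s : ℝ) (hs : 0 < s) :
    ∫ a in (-s)..s, |a| ^ (n-1) * (1 - |a|/s) ^ n
      = 2 * s ^ n * (((n-1).factorial * n.factorial : ℝ) / (2*n).factorial) := by
  have hcont : Continuous (fun a : ℝ => |a| ^ (n-1) * (1 - |a|/s) ^ n) := by
    fun_prop
  have hsplit : (∫ a in (-s)..(0:ℝ), |a| ^ (n-1) * (1 - |a|/s) ^ n)
      + (∫ a in (0:ℝ)..s, |a| ^ (n-1) * (1 - |a|/s) ^ n)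
      = ∫ a in (-s)..s, |a| ^ (n-1) * (1 - |a|/s) ^ n :=
    intervalIntegral.integral_add_adjacent_intervals
      (hcont.intervalIntegrable _ _) (hcont.intervalIntegrable _ _)
  have hneg : (∫ a in (-s)..(0:ℝ), |a| ^ (n-1) * (1 - |a|/s) ^ n)
      = ∫ a in (0:ℝ)..s, |a| ^ (n-1) * (1 - |a|/s) ^ n := by
    have h := intervalIntegral.integral_comp_neg (a := 0) (b := s)
      (fun a : ℝ => |a| ^ (n-1) * (1 - |a|/s) ^ n)
    simp only [abs_neg, neg_zero] at h
    rw [← h]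
  have hhalf : (∫ a in (0:ℝ)..s, |a| ^ (n-1) * (1 - |a|/s) ^ n)
      = s ^ n * (((n-1).factorial * n.factorial : ℝ) / (2*n).factorial) := by
    have h1 : (∫ a in (0:ℝ)..s, |a| ^ (n-1) * (1 - |a|/s) ^ n)
        = ∫ a in (0:ℝ)..s, a ^ (n-1) * (1 - a/s) ^ n := by
      apply intervalIntegral.integral_congr
      intro x hx
      rw [Set.uIcc_of_le (le_of_lt hs)] at hx
      simp only [abs_of_nonneg hx.1]
    have h2 : (∫ a in (0:ℝ)..1, (s*a) ^ (n-1) * (1 - (s*a)/s) ^ n)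
        = s⁻¹ • ∫ a in (0:ℝ)..s, a ^ (n-1) * (1 - a/s) ^ n := by
      have h := intervalIntegral.integral_comp_mul_left (a := 0) (b := 1)
        (fun a : ℝ => a ^ (n-1) * (1 - a/s) ^ n) (c := s) hs.ne'
      simpa using h
    have h3 : (∫ a in (0:ℝ)..1, (s*a) ^ (n-1) * (1 - (s*a)/s) ^ n)
        = s ^ (n-1) * ∫ a in (0:ℝ)..1, a ^ (n-1) * (1 - a) ^ n := by
      rw [← intervalIntegral.integral_const_mul]
      congr 1; ext a
      rw [mul_pow, mul_comm s a, mul_div_assoc, div_self hs.ne']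
      ring
    have h4 : (∫ a in (0:ℝ)..s, a ^ (n-1) * (1 - a/s) ^ n)
        = s • ∫ a in (0:ℝ)..1, (s*a) ^ (n-1) * (1 - (s*a)/s) ^ n := by
      rw [h2, smul_smul, mul_inv_cancel₀ hs.ne', one_smul]
    rw [h1, h4, h3, beta_nat_integral (n-1) n]
    have hcast : (n - 1 + n + 1) = 2 * n := by omega
    rw [hcast, smul_eq_mul, ← mul_assoc, ← pow_succ']
    have : n - 1 + 1 = n := by omega
    rw [this]
  rw [← hsplit, hneg, hhalf]; ring

set_option maxHeartbeats 2000000 in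
/-- Let `K'` be a symmetric convex body in an `(n+1)`-dimensional Euclidean space, `p ∈ K'` of
maximal Euclidean norm `s`, `V''` the hyperplane orthogonal to `p`, and `K'' = K' ∩ V''`. Then
`∫_{K'} ‖x‖₂^(n-1) dx ≥ Vol(K'')·sⁿ·2·(n-1)!·n!/(2n)!`. -/
theorem integral_norm_pow_ge_double_cone (n : ℕ) (hn : 1 ≤ n)
    (K' : Set (EuclideanSpace ℝ (Fin (n + 1))))
    (hKconv : Convex ℝ K') (hKcomp : IsCompact K') (hKint : (interior K').Nonempty)
    (hKsymm : ∀ x ∈ K', -x ∈ K')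
    (p : EuclideanSpace ℝ (Fin (n + 1))) (hp : p ∈ K')
    (hpmax : ∀ x ∈ K', ‖x‖ ≤ ‖p‖) (s : ℝ) (hs : s = ‖p‖) :
    ∫ x in K', ‖x‖ ^ (n - 1) ≥
      (volume (((↑) ⁻¹' K') : Set ↥(ℝ ∙ p)ᗮ)).toReal * s ^ n *
        (2 * (n - 1).factorial * n.factorial) / (2 * n).factorial := by
  classical
  -- p is nonzero and s positive
  have hp0 : p ≠ 0 := by
    rintro rfl
    have hsub : K' ⊆ {0} := by
      intro y hy
      have h := hpmax y hy
      simp only [norm_zero] at h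
      simpa using norm_le_zero_iff.mp h
    have h1 : volume (interior K') = 0 :=
      measure_mono_null (interior_subset.trans hsub) (by simp)
    exact (isOpen_interior.measure_pos volume hKint).ne' h1
  have hs0 : 0 < s := by rw [hs]; exact norm_pos_iff.mpr hp0
  set u : EuclideanSpace ℝ (Fin (n+1)) := ‖p‖⁻¹ • p with hudef
  have hu : ‖u‖ = 1 := by
    simpa using norm_smul_inv_norm (𝕜 := ℝ) hp0
  have hu_mem : u ∈ ℝ ∙ p := Submodule.smul_mem _ _ (Submodule.mem_span_singleton_self p)
  have horth : ∀ y : ↥(ℝ ∙ p)ᗮ, (inner ℝ u (y : EuclideanSpace ℝ (Fin (n+1))) : ℝ) = 0 :=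
    fun y => y.2 u hu_mem
  have hfr : Module.finrank ℝ ↥(ℝ ∙ p)ᗮ = n := by
    have h1 := Submodule.finrank_add_finrank_orthogonal (K := (ℝ ∙ p))
    rw [finrank_span_singleton hp0, finrank_euclideanSpace_fin] at h1
    omega
  let c : OrthonormalBasis (Fin n) ℝ ↥(ℝ ∙ p)ᗮ :=
    (stdOrthonormalBasis ℝ _).reindex (finCongr (by rw [hfr]))
  let v : Fin (n+1) → EuclideanSpace ℝ (Fin (n+1)) := Fin.cons u (fun j => (c j : _))
  have hv : Orthonormal ℝ v := by
    rw [orthonormal_iff_ite]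
    intro i j
    induction i using Fin.cases with
    | zero =>
      induction j using Fin.cases with
      | zero =>
        simp only [v, Fin.cons_zero, if_pos rfl]
        rw [real_inner_self_eq_norm_sq, hu]; norm_num
      | succ j =>
        simp only [v, Fin.cons_zero, Fin.cons_succ]
        rw [if_neg (Fin.succ_ne_zero j).symm]
        exact horth (c j)
    | succ i =>
      induction j using Fin.cases with
      | zero =>
        simp only [v, Fin.cons_zero, Fin.cons_succ]
        rw [if_neg (Fin.succ_ne_zero i)]
        rw [real_inner_comm]
        exact horth (c i)
      | succ j =>
        simp only [v, Fin.cons_succ, Fin.succ_inj]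
        rw [← Submodule.coe_inner]
        have := orthonormal_iff_ite.mp c.orthonormal i j
        simpa using this
  have hsp : ⊤ ≤ Submodule.span ℝ (Set.range v) := by
    rw [hv.linearIndependent.span_eq_top_of_card_eq_finrank
      (by simp [finrank_euclideanSpace_fin])]
  let B : OrthonormalBasis (Fin (n+1)) ℝ (EuclideanSpace ℝ (Fin (n+1))) :=
    OrthonormalBasis.mk hv hsp
  have hB : ∀ i, B i = v i := fun i => by
    simp [B, OrthonormalBasis.coe_mk]
  -- the measurable equivalences
  let Φ : EuclideanSpace ℝ (Fin (n+1)) ≃ᵐ ℝ × (Fin n → ℝ) :=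
    B.measurableEquiv.trans (((MeasurableEquiv.toLp 2 (Fin (n+1) → ℝ)).symm).trans
      (MeasurableEquiv.piFinSuccAbove (fun _ => ℝ) 0))
  have hΦ : MeasurePreserving Φ volume volume :=
    ((MeasureTheory.volume_preserving_piFinSuccAbove (fun _ => ℝ) 0).comp
      (EuclideanSpace.volume_preserving_symm_measurableEquiv_toLp (Fin (n+1)))).comp
      B.measurePreserving_measurableEquiv
  have hΦapp : ∀ x, Φ x = ((inner ℝ u x : ℝ),
      fun j => (inner ℝ ((c j : EuclideanSpace ℝ (Fin (n+1)))) x : ℝ)) := by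
    intro x
    have h0 : ∀ i, B.repr x i = (inner ℝ (v i) x : ℝ) := by
      intro i; rw [B.repr_apply_apply, hB]
    show (MeasurableEquiv.piFinSuccAbove (fun _ => ℝ) 0)
        (((MeasurableEquiv.toLp 2 (Fin (n+1) → ℝ)).symm) (B.measurableEquiv x)) = _
    rw [MeasurableEquiv.piFinSuccAbove_apply]
    have : ∀ i, (((MeasurableEquiv.toLp 2 (Fin (n+1) → ℝ)).symm) (B.measurableEquiv x)) i
        = (inner ℝ (v i) x : ℝ) := fun i => h0 i
    ext1
    · simpa [Fin.insertNthEquiv, v] using this 0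
    · funext j
      simpa [Fin.insertNthEquiv, Fin.tail, Fin.zero_succAbove, v] using this j.succ
  let ψ : ↥(ℝ ∙ p)ᗮ ≃ᵐ (Fin n → ℝ) :=
    c.measurableEquiv.trans ((MeasurableEquiv.toLp 2 (Fin n → ℝ)).symm)
  have hψ : MeasurePreserving ψ volume volume :=
    (EuclideanSpace.volume_preserving_symm_measurableEquiv_toLp (Fin n)).comp
      c.measurePreserving_measurableEquiv
  have hψapp : ∀ y j, ψ y j = (inner ℝ (c j) y : ℝ) := by
    intro y j
    exact c.repr_apply_apply y j
  have hψcont : Continuous ψ := by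
    have : (ψ : ↥(ℝ ∙ p)ᗮ → (Fin n → ℝ))
        = (⇑(PiLp.continuousLinearEquiv 2 ℝ (fun _ : Fin n => ℝ))) ∘ ⇑c.repr := rfl
    rw [this]
    exact (PiLp.continuousLinearEquiv 2 ℝ _).continuous.comp c.repr.continuous
  have hψsmul : ∀ (r : ℝ) y, ψ (r • y) = r • ψ y := by
    intro r y
    funext j
    rw [hψapp, real_inner_smul_right]
    simp [hψapp]
  -- the key algebraic formula
  have hkey : ∀ (A : ℝ) (z : ↥(ℝ ∙ p)ᗮ), Φ (A • u + (z : EuclideanSpace ℝ (Fin (n+1))))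
      = (A, ψ z) := by
    intro A z
    rw [hΦapp]
    ext1
    · simp only
      rw [inner_add_right, real_inner_smul_right, horth z, real_inner_self_eq_norm_sq, hu]
      norm_num
    · funext j
      simp only
      rw [inner_add_right, real_inner_smul_right]
      have h1 : (inner ℝ ((c j : EuclideanSpace ℝ (Fin (n+1)))) u : ℝ) = 0 := by
        rw [real_inner_comm]; exact horth (c j)
      rw [h1, hψapp, Submodule.coe_inner]
      ring
  -- the base set and its image
  set A : Set ↥(ℝ ∙ p)ᗮ := (↑) ⁻¹' K' with hAdef
  have hAmeas : MeasurableSet A :=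
    hKcomp.isClosed.measurableSet.preimage continuous_subtype_val.measurable
  have hAcpt : IsCompact A := by
    apply Metric.isCompact_of_isClosed_isBounded
      (hKcomp.isClosed.preimage continuous_subtype_val)
    apply Bornology.IsBounded.subset (Metric.isBounded_closedBall (x := 0) (r := s))
    intro y hy
    simp only [Metric.mem_closedBall, dist_zero_right]
    rw [hs]
    exact hpmax _ hy
  set C : Set (Fin n → ℝ) := ψ '' A with hCdef
  have hCcpt : IsCompact C := hAcpt.image hψcont
  have hvolC : volume C = volume A := by
    rw [hCdef, ψ.image_eq_preimage_symm]
    exact (MeasurePreserving.symm ψ hψ).measure_preimage hAmeas.nullMeasurableSet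
  -- the double cone in product coordinates
  set G : Set (ℝ × (Fin n → ℝ)) :=
    (fun q : ℝ × (Fin n → ℝ) => (q.1, (1 - |q.1|/s) • q.2)) '' ((Set.Icc (-s) s) ×ˢ C)
    with hGdef
  have hGcpt : IsCompact G := (isCompact_Icc.prod hCcpt).image (by fun_prop)
  have hGm : MeasurableSet G := hGcpt.measurableSet
  have hGmem : ∀ q : ℝ × (Fin n → ℝ),
      q ∈ G ↔ q.1 ∈ Set.Icc (-s) s ∧ q.2 ∈ (1 - |q.1|/s) • C := by
    rintro ⟨a, w⟩
    constructor
    · rintro ⟨⟨a', w'⟩, ⟨ha', hw'⟩, heq⟩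
      simp only [Prod.mk.injEq] at heq
      obtain ⟨rfl, rfl⟩ := heq
      exact ⟨ha', Set.smul_mem_smul_set hw'⟩
    · rintro ⟨ha, hw⟩
      obtain ⟨w', hw', hww⟩ := hw
      exact ⟨(a, w'), ⟨ha, hw'⟩, congrArg (Prod.mk a) hww⟩
  -- the preimage of G is inside K'
  have hsubK : Φ ⁻¹' G ⊆ K' := by
    intro x hx
    rw [Set.mem_preimage, hGmem] at hx
    obtain ⟨ha, hw⟩ := hx
    set a : ℝ := (Φ x).1 with hadef
    obtain ⟨w', hw', hweq⟩ := hw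
    obtain ⟨y, hyA, rfl⟩ := hw'
    have habs : |a| ≤ s := abs_le.mpr ⟨ha.1, ha.2⟩
    have hr : (0:ℝ) ≤ 1 - |a|/s := by
      rw [sub_nonneg, div_le_one hs0]; exact habs
    have hxeq : x = a • u + ((((1 - |a|/s) • y) : ↥(ℝ ∙ p)ᗮ) : EuclideanSpace ℝ (Fin (n+1))) := by
      apply Φ.injective
      rw [hkey, hψsmul]
      ext1
      · rfl
      · exact hweq.symm
    have hyK : ((y : EuclideanSpace ℝ (Fin (n+1)))) ∈ K' := hyA
    have hau : a • u = (a / s) • p := by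
      rw [hudef, smul_smul, hs, div_eq_mul_inv]
    rw [hxeq, Submodule.coe_smul, hau]
    rcases le_or_gt 0 a with hc | hc
    · have habs' : |a| = a := abs_of_nonneg hc
      have h0t : 0 ≤ a / s := div_nonneg hc hs0.le
      have h1t : a / s ≤ 1 := (div_le_one hs0).mpr (by rw [← habs']; exact habs)
      rw [habs']
      exact hKconv hp hyK h0t (by linarith) (by ring)
    · have habs' : |a| = -a := abs_of_neg hc
      have h0t : 0 ≤ -a / s := div_nonneg (by linarith) hs0.le
      have h1t : -a / s ≤ 1 := (div_le_one hs0).mpr (by rw [← habs']; exact habs)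
      rw [habs']
      have hmem : (-a/s) • (-p) + (1 - -a/s) • ((y : EuclideanSpace ℝ (Fin (n+1)))) ∈ K' :=
        hKconv (hKsymm p hp) hyK h0t (by linarith) (by ring)
      have heq2 : (-a/s) • (-p) = (a/s) • p := by
        rw [smul_neg, neg_div, neg_smul, neg_neg]
      rw [heq2] at hmem
      exact hmem
    -- done both cases
  -- the integrand bound and measure computation
  set g : ℝ × (Fin n → ℝ) → ENNReal := fun q => ENNReal.ofReal (|q.1| ^ (n-1)) with hgdef
  have hgmeas : Measurable g := by
    apply Measurable.ennreal_ofReal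
    fun_prop
  have step1 : ∫⁻ x in Φ ⁻¹' G, g (Φ x) = ∫⁻ q in G, g q :=
    hΦ.setLIntegral_comp_preimage_emb Φ.measurableEmbedding g G
  -- slice computation
  have hfinrank : Module.finrank ℝ (Fin n → ℝ) = n := by simp
  have hGslice : ∀ a : ℝ, (∫⁻ w, G.indicator g (a, w))
      = (Set.Icc (-s) s).indicator
          (fun a => ENNReal.ofReal (|a| ^ (n-1) * (1 - |a|/s) ^ n) * volume A) a := by
    intro a
    by_cases ha : a ∈ Set.Icc (-s) s
    · have habs : |a| ≤ s := abs_le.mpr ⟨ha.1, ha.2⟩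
      have hr : (0:ℝ) ≤ 1 - |a|/s := by
        rw [sub_nonneg, div_le_one hs0]; exact habs
      have hsl : ∀ w, G.indicator g (a, w)
          = ((1 - |a|/s) • C).indicator (fun _ => ENNReal.ofReal (|a| ^ (n-1))) w := by
        intro w
        by_cases hw : w ∈ (1 - |a|/s) • C
        · rw [Set.indicator_of_mem hw, Set.indicator_of_mem ((hGmem (a, w)).2 ⟨ha, hw⟩)]
        · rw [Set.indicator_of_notMem hw,
            Set.indicator_of_notMem (fun hm => hw ((hGmem (a, w)).1 hm).2)]
      have hsmul_meas : MeasurableSet ((1 - |a|/s) • C) := by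
        rw [show (1 - |a|/s) • C = (fun w => (1 - |a|/s) • w) '' C from rfl]
        exact (hCcpt.image (continuous_id.const_smul (1 - |a|/s))).measurableSet
      rw [lintegral_congr hsl, lintegral_indicator hsmul_meas, setLIntegral_const,
        Measure.addHaar_smul_of_nonneg volume hr C, hfinrank, hvolC,
        Set.indicator_of_mem ha, ENNReal.ofReal_mul (by positivity)]
      ring
    · have hsl : ∀ w, G.indicator g (a, w) = 0 := by
        intro w
        apply Set.indicator_of_notMem
        intro hm
        exact ha ((hGmem (a, w)).1 hm).1
      rw [lintegral_congr hsl, lintegral_zero, Set.indicator_of_notMem ha]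
  -- the 1D function
  set h1d : ℝ → ℝ := fun a => |a| ^ (n-1) * (1 - |a|/s) ^ n with h1ddef
  have h1dcont : Continuous h1d := by fun_prop
  have h1dint : IntegrableOn h1d (Set.Icc (-s) s) volume :=
    h1dcont.continuousOn.integrableOn_compact isCompact_Icc
  have h1dnn : 0 ≤ᵐ[volume.restrict (Set.Icc (-s) s)] h1d := by
    apply ae_restrict_of_forall_mem measurableSet_Icc
    intro a ha
    have habs : |a| ≤ s := abs_le.mpr ⟨ha.1, ha.2⟩
    have hr : (0:ℝ) ≤ 1 - |a|/s := by
      rw [sub_nonneg, div_le_one hs0]; exact habs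
    positivity
  have h1dval : ∫ a in Set.Icc (-s) s, h1d a
      = 2 * s ^ n * (((n-1).factorial * n.factorial : ℝ) / (2*n).factorial) := by
    rw [MeasureTheory.integral_Icc_eq_integral_Ioc,
      ← intervalIntegral.integral_of_le (by linarith)]
    exact oneD_integral n hn s hs0
  -- compute the lintegral over G
  have step2 : ∫⁻ q in G, g q
      = ENNReal.ofReal (2 * s ^ n * (((n-1).factorial * n.factorial : ℝ) / (2*n).factorial))
        * volume A := by
    rw [← lintegral_indicator hGm, Measure.volume_eq_prod,
      lintegral_prod _ ((hgmeas.indicator hGm).aemeasurable)]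
    calc ∫⁻ a, ∫⁻ w, G.indicator g (a, w)
        = ∫⁻ a, (Set.Icc (-s) s).indicator
            (fun a => ENNReal.ofReal (h1d a) * volume A) a := by
          apply lintegral_congr
          intro a
          rw [hGslice a]
      _ = ∫⁻ a in Set.Icc (-s) s, ENNReal.ofReal (h1d a) * volume A :=
          (lintegral_indicator measurableSet_Icc _)
      _ = (∫⁻ a in Set.Icc (-s) s, ENNReal.ofReal (h1d a)) * volume A := by
          rw [lintegral_mul_const]
          apply Measurable.ennreal_ofReal
          fun_prop
      _ = ENNReal.ofReal (∫ a in Set.Icc (-s) s, h1d a) * volume A := by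
          rw [ofReal_integral_eq_lintegral_ofReal h1dint h1dnn]
      _ = _ := by rw [h1dval]
  -- the left-hand side
  have hfcont : Continuous fun x : EuclideanSpace ℝ (Fin (n+1)) => ‖x‖ ^ (n-1) := by fun_prop
  have hInt : IntegrableOn (fun x : EuclideanSpace ℝ (Fin (n+1)) => ‖x‖ ^ (n-1)) K' volume :=
    hfcont.continuousOn.integrableOn_compact hKcomp
  have hLHSeq : ENNReal.ofReal (∫ x in K', ‖x‖ ^ (n-1))
      = ∫⁻ x in K', ENNReal.ofReal (‖x‖ ^ (n-1)) :=
    ofReal_integral_eq_lintegral_ofReal hInt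
      (Filter.Eventually.of_forall fun x => by positivity)
  -- the chain of inequalities
  have hchain : ∫⁻ q in G, g q ≤ ∫⁻ x in K', ENNReal.ofReal (‖x‖ ^ (n-1)) := by
    rw [← step1]
    calc ∫⁻ x in Φ ⁻¹' G, g (Φ x)
        ≤ ∫⁻ x in Φ ⁻¹' G, ENNReal.ofReal (‖x‖ ^ (n-1)) := by
          apply lintegral_mono
          intro x
          have hx1 : (Φ x).1 = (inner ℝ u x : ℝ) := by rw [hΦapp]
          show ENNReal.ofReal (|(Φ x).1| ^ (n-1)) ≤ ENNReal.ofReal (‖x‖ ^ (n-1))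
          rw [hx1]
          apply ENNReal.ofReal_le_ofReal
          apply pow_le_pow_left₀ (abs_nonneg _)
          calc |(inner ℝ u x : ℝ)| ≤ ‖u‖ * ‖x‖ := abs_real_inner_le_norm u x
            _ = ‖x‖ := by rw [hu, one_mul]
      _ ≤ ∫⁻ x in K', ENNReal.ofReal (‖x‖ ^ (n-1)) := lintegral_mono_set hsubK
  -- put everything together
  have hLHS0 : 0 ≤ ∫ x in K', ‖x‖ ^ (n-1) :=
    setIntegral_nonneg hKcomp.measurableSet fun x _ => by positivity
  have hβ0 : (0:ℝ) ≤ 2 * s ^ n * (((n-1).factorial * n.factorial : ℝ) / (2*n).factorial) := by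
    positivity
  have hfinal : ENNReal.ofReal (2 * s ^ n
        * (((n-1).factorial * n.factorial : ℝ) / (2*n).factorial)) * volume A
      ≤ ENNReal.ofReal (∫ x in K', ‖x‖ ^ (n-1)) := by
    rw [hLHSeq, ← step2]
    exact hchain
  rw [ge_iff_le]
  have hAfin : volume A ≠ ⊤ := hAcpt.measure_lt_top.ne
  calc (volume A).toReal * s ^ n * (2 * (n - 1).factorial * n.factorial) / (2 * n).factorial
      = (ENNReal.ofReal (2 * s ^ n
          * (((n-1).factorial * n.factorial : ℝ) / (2*n).factorial)) * volume A).toReal := by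
        rw [ENNReal.toReal_mul, ENNReal.toReal_ofReal hβ0]
        ring
    _ ≤ (ENNReal.ofReal (∫ x in K', ‖x‖ ^ (n-1))).toReal := by
        apply ENNReal.toReal_mono ENNReal.ofReal_ne_top hfinal
    _ = ∫ x in K', ‖x‖ ^ (n-1) := ENNReal.toReal_ofReal hLHS0
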